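/- arXiv:2605.05917 — 3 statements merged into one kernel-verified Lean document; each statement's English description precedes it below -/
import Mathlib

section
/- Let (V, ‖·‖) be a normed real vector space, let u ∈ V with ‖u‖ = 1, let x ∈ V, and let L ≥ 0. Define f : [0,L] → ℝ by f(t) = ‖x − t·u‖. If there exists λ ∈ [0,L] such that λ ≤ ‖x‖ and L − λ ≤ ‖x − L·u‖, then ∫_0^L f(t) dt ≥ (1/4)·L². -/
open MeasureTheory intervalIntegral

/-- Key integral lower bound: if there is a splitting point `λ ∈ [0, L]` with
`λ ≤ ‖x‖` and `L - λ ≤ ‖x - L • u‖`, then `∫_0^L ‖x - t • u‖ dt ≥ L² / 4`. -/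
theorem stmt1 {V : Type*} [NormedAddCommGroup V] [NormedSpace ℝ V]
    (L : ℝ) (hL : 0 ≤ L) (u x : V) (hu : ‖u‖ = 1)
    (hsplit : ∃ lam : ℝ, lam ∈ Set.Icc 0 L ∧ lam ≤ ‖x‖ ∧ L - lam ≤ ‖x - L • u‖) :
    (1 / 4) * L ^ 2 ≤ ∫ t in (0 : ℝ)..L, ‖x - t • u‖ := by
  obtain ⟨lam, ⟨hlam0, hlamL⟩, h1, h2⟩ := hsplit
  have hcont : Continuous fun t : ℝ => ‖x - t • u‖ := by continuity
  -- pointwise lower bound by |t - lam| on [0, L]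
  have hpt : ∀ t ∈ Set.uIcc (0:ℝ) L, |t - lam| ≤ ‖x - t • u‖ := by
    intro t ht
    rw [Set.uIcc_of_le hL] at ht
    obtain ⟨ht0, htL⟩ := ht
    rw [abs_sub_le_iff]
    constructor
    · -- t - lam ≤ ‖x - t•u‖ : from ‖x - L•u‖ ≤ ‖x - t•u‖ + (L - t)
      have : ‖x - L • u‖ ≤ ‖x - t • u‖ + (L - t) := by
        calc ‖x - L • u‖ = ‖(x - t • u) - (L - t) • u‖ := by
              rw [sub_smul]; congr 1; abel
          _ ≤ ‖x - t • u‖ + ‖(L - t) • u‖ := norm_sub_le _ _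
          _ = ‖x - t • u‖ + (L - t) := by
              rw [norm_smul, hu, mul_one, Real.norm_eq_abs, abs_of_nonneg (by linarith)]
      linarith
    · -- lam - t ≤ ‖x - t•u‖ : from ‖x‖ ≤ ‖x - t•u‖ + t
      have : ‖x‖ ≤ ‖x - t • u‖ + t := by
        calc ‖x‖ = ‖(x - t • u) + t • u‖ := by congr 1; abel
          _ ≤ ‖x - t • u‖ + ‖t • u‖ := norm_add_le _ _
          _ = ‖x - t • u‖ + t := by
              rw [norm_smul, hu, mul_one, Real.norm_eq_abs, abs_of_nonneg ht0]
      linarith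
  have hmono : (∫ t in (0:ℝ)..L, |t - lam|) ≤ ∫ t in (0:ℝ)..L, ‖x - t • u‖ := by
    apply intervalIntegral.integral_mono_on hL
    · exact ((continuous_id.sub continuous_const).abs).intervalIntegrable _ _
    · exact hcont.intervalIntegrable _ _
    · intro t ht
      exact hpt t (by rw [Set.uIcc_of_le hL]; exact ht)
  have hcalc : (∫ t in (0:ℝ)..L, |t - lam|) = lam ^ 2 / 2 + (L - lam) ^ 2 / 2 := by
    have hs : (∫ t in (0:ℝ)..L, |t - lam|)
        = (∫ t in (0:ℝ)..lam, |t - lam|) + ∫ t in lam..L, |t - lam| := by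
      rw [intervalIntegral.integral_add_adjacent_intervals] <;>
        exact ((continuous_id.sub continuous_const).abs).intervalIntegrable _ _
    have e1 : (∫ t in (0:ℝ)..lam, |t - lam|) = ∫ t in (0:ℝ)..lam, (lam - t) := by
      apply intervalIntegral.integral_congr
      intro t ht
      rw [Set.uIcc_of_le hlam0] at ht
      show |t - lam| = lam - t
      rw [abs_of_nonpos (by linarith [ht.2])]; ring
    have e2 : (∫ t in lam..L, |t - lam|) = ∫ t in lam..L, (t - lam) := by
      apply intervalIntegral.integral_congr
      intro t ht
      rw [Set.uIcc_of_le hlamL] at ht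
      show |t - lam| = t - lam
      exact abs_of_nonneg (by linarith [ht.1])
    rw [hs, e1, e2]
    rw [intervalIntegral.integral_sub (intervalIntegrable_const)
        (intervalIntegrable_id),
      intervalIntegral.integral_sub (intervalIntegrable_id)
        (intervalIntegrable_const)]
    simp [integral_id]
    ring
  nlinarith [hmono, hcalc, sq_nonneg (lam - (L - lam))]
end

section
/- Let (V, ‖·‖) be a normed real vector space. Let p : [x₁, y₁] → V and q : [x₂, y₂] → V be unit-speed parametrisations of line segments. With cost(γ_xy) and cost(γ_yx) defined as the integrals of distances along the two L-shaped matchings (vertical-then-horizontal and horizontal-then-vertical respectively), it holds that cost(γ_yx) ≤ 5 · cost(γ_xy). -/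
open MeasureTheory intervalIntegral

/-- Lower bound: the integral of the distance from a unit-speed segment to a fixed
point is at least a quarter of the squared segment length. -/
lemma seg_lower {V : Type*} [NormedAddCommGroup V] [NormedSpace ℝ V]
    (x₁ y₁ : ℝ) (h : x₁ ≤ y₁) (px u z : V) (hu : ‖u‖ = 1) :
    (y₁ - x₁) ^ 2 / 4 ≤ ∫ s in x₁..y₁, ‖px + (s - x₁) • u - z‖ := by
  set d := ‖z - px‖ with hd
  have hd0 : 0 ≤ d := norm_nonneg _
  set m := (x₁ + y₁) / 2 with hm
  have hx₁m : x₁ ≤ m := by simp only [hm]; linarith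
  have hmy₁ : m ≤ y₁ := by simp only [hm]; linarith
  have hcont : Continuous fun s : ℝ => ‖px + (s - x₁) • u - z‖ := by fun_prop
  have hint : ∀ a b : ℝ,
      IntervalIntegrable (fun s => ‖px + (s - x₁) • u - z‖) volume a b :=
    fun a b => hcont.intervalIntegrable a b
  have hsplit : (∫ s in x₁..m, ‖px + (s - x₁) • u - z‖) +
      (∫ s in m..y₁, ‖px + (s - x₁) • u - z‖) =
      ∫ s in x₁..y₁, ‖px + (s - x₁) • u - z‖ :=
    integral_add_adjacent_intervals (hint _ _) (hint _ _)
  have hnorm : ∀ s : ℝ, x₁ ≤ s → ‖(s - x₁) • u‖ = s - x₁ := by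
    intro s hs
    rw [norm_smul, hu, mul_one, Real.norm_eq_abs, abs_of_nonneg (by linarith)]
  have h1 : (∫ s in x₁..m, ((x₁ + d) - s)) ≤
      ∫ s in x₁..m, ‖px + (s - x₁) • u - z‖ := by
    apply integral_mono_on hx₁m ((by fun_prop : Continuous fun s : ℝ => (x₁ + d) - s).intervalIntegrable _ _) (hint _ _)
    intro s hs
    have hs1 : x₁ ≤ s := hs.1
    have htri : d ≤ ‖z - (px + (s - x₁) • u)‖ + ‖(s - x₁) • u‖ := by
      calc d = ‖(z - (px + (s - x₁) • u)) + (s - x₁) • u‖ := by rw [hd]; congr 1; abel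
        _ ≤ ‖z - (px + (s - x₁) • u)‖ + ‖(s - x₁) • u‖ := norm_add_le _ _
    rw [hnorm s hs1, norm_sub_rev] at htri
    linarith
  have h2 : (∫ s in m..y₁, (s - (x₁ + d))) ≤
      ∫ s in m..y₁, ‖px + (s - x₁) • u - z‖ := by
    apply integral_mono_on hmy₁ ((by fun_prop : Continuous fun s : ℝ => s - (x₁ + d)).intervalIntegrable _ _) (hint _ _)
    intro s hs
    have hs1 : x₁ ≤ s := le_trans hx₁m hs.1
    have htri : s - x₁ ≤ ‖px + (s - x₁) • u - z‖ + d := by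
      calc s - x₁ = ‖(s - x₁) • u‖ := (hnorm s hs1).symm
        _ = ‖(px + (s - x₁) • u - z) + (z - px)‖ := by congr 1; abel
        _ ≤ ‖px + (s - x₁) • u - z‖ + ‖z - px‖ := norm_add_le _ _
        _ = ‖px + (s - x₁) • u - z‖ + d := by rw [hd]
    linarith
  have e1 : (∫ s in x₁..m, ((x₁ + d) - s)) =
      (x₁ + d) * (m - x₁) - (m ^ 2 - x₁ ^ 2) / 2 := by
    rw [integral_sub intervalIntegrable_const intervalIntegrable_id,
      intervalIntegral.integral_const, integral_id]
    simp [smul_eq_mul]; ring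
  have e2 : (∫ s in m..y₁, (s - (x₁ + d))) =
      (y₁ ^ 2 - m ^ 2) / 2 - (x₁ + d) * (y₁ - m) := by
    rw [integral_sub intervalIntegrable_id intervalIntegrable_const,
      intervalIntegral.integral_const, integral_id]
    simp [smul_eq_mul]; ring
  rw [← hsplit]
  rw [e1] at h1; rw [e2] at h2
  have hmv : m = (x₁ + y₁) / 2 := hm
  nlinarith [h1, h2]

/-- The factor-5 approximation lemma: `cost(γ_yx) ≤ 5 · cost(γ_xy)` for the two
L-shaped matchings of two line segments in a normed real vector space. -/
theorem stmt5 {V : Type*} [NormedAddCommGroup V] [NormedSpace ℝ V]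
    (x₁ y₁ x₂ y₂ : ℝ) (hx : x₁ ≤ y₁) (hy : x₂ ≤ y₂)
    (px qx u v : V) (hu : ‖u‖ = 1) (hv : ‖v‖ = 1)
    (p : ℝ → V) (q : ℝ → V)
    (hp : ∀ s, p s = px + (s - x₁) • u) (hq : ∀ t, q t = qx + (t - x₂) • v) :
    (∫ s in x₁..y₁, ‖p s - q x₂‖) + (∫ t in x₂..y₂, ‖p y₁ - q t‖) ≤
      5 * ((∫ t in x₂..y₂, ‖p x₁ - q t‖) + ∫ s in x₁..y₁, ‖p s - q y₂‖) := by
  set Lp := y₁ - x₁ with hLp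
  set Lq := y₂ - x₂ with hLq
  have hLp0 : 0 ≤ Lp := by linarith
  have hLq0 : 0 ≤ Lq := by linarith
  -- rewrite integrands via hp, hq
  have hpc : Continuous p := by
    have : p = fun s => px + (s - x₁) • u := funext hp
    rw [this]; fun_prop
  have hqc : Continuous q := by
    have : q = fun t => qx + (t - x₂) • v := funext hq
    rw [this]; fun_prop
  have hqq : ‖q y₂ - q x₂‖ = Lq := by
    rw [hq, hq]
    have : qx + (y₂ - x₂) • v - (qx + (x₂ - x₂) • v) = (y₂ - x₂) • v := by
      simp
    rw [this, norm_smul, hv, mul_one, Real.norm_eq_abs, abs_of_nonneg hLq0]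
  have hpp : ‖p y₁ - p x₁‖ = Lp := by
    rw [hp, hp]
    have : px + (y₁ - x₁) • u - (px + (x₁ - x₁) • u) = (y₁ - x₁) • u := by
      simp
    rw [this, norm_smul, hu, mul_one, Real.norm_eq_abs, abs_of_nonneg hLp0]
  -- integrability
  have ip : ∀ (z : V) (a b : ℝ), IntervalIntegrable (fun s => ‖p s - z‖) volume a b :=
    fun z a b => (by fun_prop : Continuous fun s => ‖p s - z‖).intervalIntegrable a b
  have iq : ∀ (z : V) (a b : ℝ), IntervalIntegrable (fun t => ‖z - q t‖) volume a b :=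
    fun z a b => (by fun_prop : Continuous fun t => ‖z - q t‖).intervalIntegrable a b
  -- upper bounds
  have up1 : (∫ s in x₁..y₁, ‖p s - q x₂‖) ≤
      (∫ s in x₁..y₁, ‖p s - q y₂‖) + Lp * Lq := by
    have : (∫ s in x₁..y₁, ‖p s - q x₂‖) ≤ ∫ s in x₁..y₁, (‖p s - q y₂‖ + Lq) := by
      apply integral_mono_on hx (ip _ _ _)
        (((ip (q y₂) x₁ y₁)).add intervalIntegrable_const)
      intro s _
      calc ‖p s - q x₂‖ = ‖(p s - q y₂) + (q y₂ - q x₂)‖ := by congr 1; abel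
        _ ≤ ‖p s - q y₂‖ + ‖q y₂ - q x₂‖ := norm_add_le _ _
        _ = ‖p s - q y₂‖ + Lq := by rw [hqq]
    rw [integral_add (ip (q y₂) x₁ y₁) intervalIntegrable_const, intervalIntegral.integral_const] at this
    simpa [smul_eq_mul, mul_comm] using this
  have up2 : (∫ t in x₂..y₂, ‖p y₁ - q t‖) ≤
      (∫ t in x₂..y₂, ‖p x₁ - q t‖) + Lp * Lq := by
    have : (∫ t in x₂..y₂, ‖p y₁ - q t‖) ≤ ∫ t in x₂..y₂, (‖p x₁ - q t‖ + Lp) := by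
      apply integral_mono_on hy (iq _ _ _)
        ((iq (p x₁) x₂ y₂).add intervalIntegrable_const)
      intro t _
      calc ‖p y₁ - q t‖ = ‖(p y₁ - p x₁) + (p x₁ - q t)‖ := by congr 1; abel
        _ ≤ ‖p y₁ - p x₁‖ + ‖p x₁ - q t‖ := norm_add_le _ _
        _ = ‖p x₁ - q t‖ + Lp := by rw [hpp]; ring
    rw [integral_add (iq (p x₁) x₂ y₂) intervalIntegrable_const, intervalIntegral.integral_const] at this
    simpa [smul_eq_mul, mul_comm] using this
  -- lower bounds
  have low1 : Lp ^ 2 / 4 ≤ ∫ s in x₁..y₁, ‖p s - q y₂‖ := by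
    have := seg_lower x₁ y₁ hx px u (q y₂) hu
    have heq : (fun s => ‖px + (s - x₁) • u - q y₂‖) = fun s => ‖p s - q y₂‖ := by
      funext s; rw [hp]
    rwa [heq] at this
  have low2 : Lq ^ 2 / 4 ≤ ∫ t in x₂..y₂, ‖p x₁ - q t‖ := by
    have := seg_lower x₂ y₂ hy qx v (p x₁) hv
    have heq : (fun t => ‖qx + (t - x₂) • v - p x₁‖) = fun t => ‖p x₁ - q t‖ := by
      funext t; rw [hq, norm_sub_rev]
    rwa [heq] at this
  nlinarith [sq_nonneg (Lp - Lq), up1, up2, low1, low2]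
end

section
/- Let v, w ∈ ℝ² be linearly independent, i.e. v₁w₂ − w₁v₂ ≠ 0, and let Δ := {λv + μw : λ, μ ≥ 0} be the cone they span. Suppose K ⊆ ℝ² is a balanced convex polygon having v and w as adjacent vertices (so the segment from v to w lies on the boundary of K). Then for every z ∈ Δ, the gauge satisfies G_K(z) = ((w₂ − v₂)·z₁ + (v₁ − w₁)·z₂) / (v₁w₂ − w₁v₂). In particular, G_K is linear on the cone Δ. -/
open Pointwise

/-- The gauge (Minkowski functional) of a set in the plane. -/
noncomputable def gaugeFn (K : Set (ℝ × ℝ)) (z : ℝ × ℝ) : ℝ :=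
  sInf {l : ℝ | 0 ≤ l ∧ z ∈ l • K}

/-- On the cone spanned by two adjacent vertices `v, w` of a balanced convex
polygon `K` (the segment from `v` to `w` lies on the boundary of `K`), the
gauge is given by the linear formula
`G_K(z) = ((w₂ - v₂) z₁ + (v₁ - w₁) z₂)/(v₁ w₂ - w₁ v₂)`. -/
theorem stmt12 (v w : ℝ × ℝ) (hind : v.1 * w.2 - w.1 * v.2 ≠ 0)
    (K : Set (ℝ × ℝ))
    (hbal : ∀ l : ℝ, l ∈ Set.Icc (-1 : ℝ) 1 → l • K ⊆ K)
    (hconv : Convex ℝ K)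
    (hbdd : Bornology.IsBounded K)
    (hcl : IsClosed K)
    (hv : v ∈ K) (hw : w ∈ K)
    (hbdry : segment ℝ v w ⊆ frontier K) :
    ∀ z ∈ {z : ℝ × ℝ | ∃ l m : ℝ, 0 ≤ l ∧ 0 ≤ m ∧ z = l • v + m • w},
      gaugeFn K z = ((w.2 - v.2) * z.1 + (v.1 - w.1) * z.2) /
        (v.1 * w.2 - w.1 * v.2) := by
  set D := v.1 * w.2 - w.1 * v.2 with hD
  -- Cramer coordinates
  set A : ℝ × ℝ → ℝ := fun z => (z.1 * w.2 - w.1 * z.2) / D with hA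
  set B : ℝ × ℝ → ℝ := fun z => (v.1 * z.2 - z.1 * v.2) / D with hB
  have hcram : ∀ z : ℝ × ℝ, A z • v + B z • w = z := by
    intro z
    have h1 : (A z • v + B z • w).1 = z.1 := by
      simp only [hA, hB, Prod.fst_add, Prod.smul_fst, smul_eq_mul]
      field_simp
      ring
    have h2 : (A z • v + B z • w).2 = z.2 := by
      simp only [hA, hB, Prod.snd_add, Prod.smul_snd, smul_eq_mul]
      field_simp
      ring
    exact Prod.ext h1 h2
  -- points with small Cramer coordinates lie in K
  have hsmall : ∀ z : ℝ × ℝ, |A z| ≤ 1/2 → |B z| ≤ 1/2 → z ∈ K := by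
    intro z ha hb
    have hav : (2 * A z) • v ∈ K := by
      refine hbal (2 * A z) ?_ (⟨v, hv, rfl⟩)
      constructor <;> [nlinarith [abs_nonneg (A z), neg_abs_le (A z)];
        nlinarith [le_abs_self (A z)]]
    have hbw : (2 * B z) • w ∈ K := by
      refine hbal (2 * B z) ?_ (⟨w, hw, rfl⟩)
      constructor <;> [nlinarith [neg_abs_le (B z)]; nlinarith [le_abs_self (B z)]]
    have := hconv hav hbw (by norm_num : (0:ℝ) ≤ 1/2) (by norm_num : (0:ℝ) ≤ 1/2)
      (by norm_num)
    have heq : (1/2 : ℝ) • ((2 * A z) • v) + (1/2 : ℝ) • ((2 * B z) • w) = z := by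
      rw [smul_smul, smul_smul]
      have : (1/2 : ℝ) * (2 * A z) = A z := by ring
      rw [this]
      have : (1/2 : ℝ) * (2 * B z) = B z := by ring
      rw [this]
      exact hcram z
    rwa [heq] at this
  -- 0 lies in the interior of K
  have h0int : (0 : ℝ × ℝ) ∈ interior K := by
    have hU : IsOpen {z : ℝ × ℝ | |A z| < 1/2 ∧ |B z| < 1/2} := by
      have hca : Continuous fun z : ℝ × ℝ => |A z| := by
        simp only [hA]; fun_prop
      have hcb : Continuous fun z : ℝ × ℝ => |B z| := by
        simp only [hB]; fun_prop
      exact (isOpen_lt hca continuous_const).inter (isOpen_lt hcb continuous_const)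
    have hUK : {z : ℝ × ℝ | |A z| < 1/2 ∧ |B z| < 1/2} ⊆ K := fun z hz =>
      hsmall z hz.1.le hz.2.le
    have h0U : (0 : ℝ × ℝ) ∈ {z : ℝ × ℝ | |A z| < 1/2 ∧ |B z| < 1/2} := by
      simp [hA, hB]
    exact interior_maximal hUK hU h0U
  rintro z ⟨l, m, hl, hm, rfl⟩
  -- the right-hand side equals l + m
  have hrhs : ((w.2 - v.2) * (l • v + m • w).1 + (v.1 - w.1) * (l • v + m • w).2) / D
      = l + m := by
    simp only [Prod.fst_add, Prod.snd_add, Prod.smul_fst, Prod.smul_snd, smul_eq_mul]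
    field_simp
    ring
  rw [hrhs]
  -- now compute the gauge
  set z := l • v + m • w with hz
  set S := {t : ℝ | 0 ≤ t ∧ z ∈ t • K} with hS
  have hbdd' : BddBelow S := ⟨0, fun t ht => ht.1⟩
  rcases eq_or_lt_of_le (by positivity : (0:ℝ) ≤ l + m) with h0 | h0
  · -- l + m = 0, so l = m = 0 and z = 0
    have hl0 : l = 0 := by linarith
    have hm0 : m = 0 := by linarith
    have hz0 : z = 0 := by simp [hz, hl0, hm0]
    have h0S : (0 : ℝ) ∈ S := by
      refine ⟨le_refl 0, ?_⟩
      rw [hz0]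
      exact ⟨v, hv, by simp⟩
    rw [← h0]
    exact le_antisymm (csInf_le hbdd' h0S) (le_csInf ⟨0, h0S⟩ fun t ht => ht.1)
  · -- l + m > 0
    have hne : l + m ≠ 0 := ne_of_gt h0
    -- the boundary point
    set p : ℝ × ℝ := (l / (l + m)) • v + (m / (l + m)) • w with hp
    have hpseg : p ∈ segment ℝ v w :=
      ⟨l / (l + m), m / (l + m), by positivity, by positivity, by field_simp, rfl⟩
    have hpK : p ∈ K := hconv.segment_subset hv hw hpseg
    have hzp : (l + m) • p = z := by
      rw [hp, smul_add, smul_smul, smul_smul, hz]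
      congr 1 <;> · congr 1; field_simp
    have hmemS : l + m ∈ S := ⟨h0.le, ⟨p, hpK, hzp⟩⟩
    refine le_antisymm (csInf_le hbdd' hmemS) (le_csInf ⟨_, hmemS⟩ ?_)
    rintro t ⟨ht0, k, hk, hzk⟩
    by_contra hlt
    push_neg at hlt
    -- then p = (t/(l+m)) • k is an interior point, contradicting p ∈ frontier K
    have hpk : p = (t / (l + m)) • k := by
      have : (l + m) • p = (l + m) • ((t / (l + m)) • k) := by
        rw [hzp, ← hzk, smul_smul]
        congr 1
        field_simp
      exact smul_right_injective _ hne this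
    have hs1 : t / (l + m) < 1 := (div_lt_one h0).mpr hlt
    have hs0 : 0 ≤ t / (l + m) := by positivity
    have hint : p ∈ interior K := by
      have := hconv.combo_interior_self_mem_interior h0int hk
        (a := 1 - t / (l + m)) (b := t / (l + m)) (by linarith) hs0 (by ring)
      rwa [smul_zero, zero_add, ← hpk] at this
    have hfr : p ∈ frontier K := hbdry hpseg
    rw [hcl.frontier_eq] at hfr
    exact hfr.2 hint
end
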